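/- arXiv:1902.00102 — 3 statements merged into one kernel-verified Lean document; each statement's English description precedes it below -/
import Mathlib

section
/- Let R be a commutative ring, let A₁ be an n×n matrix and A₂ an m×m matrix over R, let u be a row/column index of A₁ and v a row/column index of A₂, and let b, c ∈ R. Let M be the (n+m)×(n+m) block matrix whose upper-left block is A₁, whose lower-right block is A₂, whose upper-right block has the single nonzero entry b in position (u,v), and whose lower-left block has the single nonzero entry c in position (v,u). Then det M = det A₁ · det A₂ − b·c · det(A₁ with row and column u deleted) · det(A₂ with row and column v deleted). -/
open Matrix

/-- Determinant of a matrix whose column `u` is replaced by `b` at position `u` and `0`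
elsewhere: it equals `b` times the `(u,u)` minor. -/
lemma det_updateCol_if_single {R : Type*} [CommRing R] {n : ℕ}
    (A : Matrix (Fin (n + 1)) (Fin (n + 1)) R) (u : Fin (n + 1)) (b : R) :
    (A.updateCol u (fun i => if i = u then b else 0)).det
      = b * (A.submatrix u.succAbove u.succAbove).det := by
  rw [det_succ_column _ u, Finset.sum_eq_single u]
  · have hsub : (A.updateCol u (fun i => if i = u then b else 0)).submatrix
        u.succAbove u.succAbove = A.submatrix u.succAbove u.succAbove := by
      ext i j
      simp [updateCol_apply, (Fin.succAbove_ne u j).symm, Fin.succAbove_ne u j]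
    rw [hsub]
    simp [updateCol_apply]
  · intro i _ hi
    simp [updateCol_apply, hi]
  · simp

/-- Determinant expansion for a block matrix with a single connecting edge:
the off-diagonal blocks have a single nonzero entry `b` at `(u, v)` and `c` at `(v, u)`. -/
theorem det_single_edge_block {R : Type*} [CommRing R] {n m : ℕ}
    (A₁ : Matrix (Fin (n + 1)) (Fin (n + 1)) R)
    (A₂ : Matrix (Fin (m + 1)) (Fin (m + 1)) R)
    (u : Fin (n + 1)) (v : Fin (m + 1)) (b c : R) :
    (Matrix.fromBlocks A₁
        (Matrix.of fun i j => if i = u ∧ j = v then b else 0)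
        (Matrix.of fun i j => if i = v ∧ j = u then c else 0)
        A₂).det
      = A₁.det * A₂.det
        - b * c * (A₁.submatrix u.succAbove u.succAbove).det
            * (A₂.submatrix v.succAbove v.succAbove).det := by
  set B : Matrix (Fin (n + 1)) (Fin (m + 1)) R :=
    Matrix.of fun i j => if i = u ∧ j = v then b else 0 with hB
  set C : Matrix (Fin (m + 1)) (Fin (n + 1)) R :=
    Matrix.of fun i j => if i = v ∧ j = u then c else 0 with hC
  set M : Matrix (Sum (Fin (n + 1)) (Fin (m + 1))) (Sum (Fin (n + 1)) (Fin (m + 1))) R :=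
    Matrix.fromBlocks A₁ B C A₂ with hM
  set f : Sum (Fin (n + 1)) (Fin (m + 1)) → R := Sum.elim (fun i => A₁ i u) 0 with hf
  set g : Sum (Fin (n + 1)) (Fin (m + 1)) → R :=
    fun i => if i = Sum.inr v then c else 0 with hg
  have hcol : (fun i => M i (Sum.inl u)) = f + g := by
    funext i
    rcases i with i | i <;>
      simp [hM, hf, hg, hB, hC]
  have step1 : M.det = (M.updateCol (Sum.inl u) f).det
      + (M.updateCol (Sum.inl u) g).det := by
    conv_lhs => rw [← updateCol_eq_self M (Sum.inl u), hcol,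
      det_updateCol_add]
  have hMf : M.updateCol (Sum.inl u) f = Matrix.fromBlocks A₁ B 0 A₂ := by
    ext i j
    rcases i with i | i <;> rcases j with j | j <;>
      simp [updateCol_apply, hM, hf, hB, hC] <;>
      first
        | rfl
        | (split_ifs <;> simp_all)
        | (intros; simp_all)
  set M₂ := M.updateCol (Sum.inl u) g with hM₂
  set f' : Sum (Fin (n + 1)) (Fin (m + 1)) → R :=
    fun i => if i = Sum.inl u then b else 0 with hf'
  set g' : Sum (Fin (n + 1)) (Fin (m + 1)) → R := Sum.elim 0 (fun i => A₂ i v) with hg'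
  have hcol2 : (fun i => M₂ i (Sum.inr v)) = f' + g' := by
    funext i
    rcases i with i | i <;>
      simp [hM₂, hM, hf', hg', hg, hB, hC, updateCol_apply]
  have step2 : M₂.det = (M₂.updateCol (Sum.inr v) f').det
      + (M₂.updateCol (Sum.inr v) g').det := by
    conv_lhs => rw [← updateCol_eq_self M₂ (Sum.inr v), hcol2,
      det_updateCol_add]
  have hMg' : M₂.updateCol (Sum.inr v) g'
      = Matrix.fromBlocks (A₁.updateCol u 0) 0 C A₂ := by
    ext i j
    rcases i with i | i <;> rcases j with j | j <;>
      simp [updateCol_apply, hM₂, hM, hg', hg, hB, hC] <;>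
      first
        | rfl
        | (split_ifs <;> simp_all)
        | (intros; simp_all)
  have hdetg' : (M₂.updateCol (Sum.inr v) g').det = 0 := by
    rw [hMg', det_fromBlocks_zero₁₂]
    have : (A₁.updateCol u 0).det = 0 :=
      det_eq_zero_of_column_eq_zero u (fun i => by simp)
    rw [this, zero_mul]
  set M₃ := M₂.updateCol (Sum.inr v) f' with hM₃
  set σ : Equiv.Perm (Sum (Fin (n + 1)) (Fin (m + 1))) :=
    Equiv.swap (Sum.inl u) (Sum.inr v) with hσ
  set T : Matrix (Fin (n + 1)) (Fin (n + 1)) R :=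
    A₁.updateCol u (fun i => if i = u then b else 0) with hT
  set S : Matrix (Fin (m + 1)) (Fin (m + 1)) R :=
    A₂.updateCol v (fun i => if i = v then c else 0) with hS
  have hswap : M₃.submatrix id σ = Matrix.fromBlocks T 0 0 S := by
    ext i j
    rcases i with i | i <;> rcases j with j | j <;>
      simp [hM₃, hM₂, hM, hσ, hT, hS, hf', hg, hB, hC, updateCol_apply,
        Equiv.swap_apply_def] <;>
      split_ifs <;> simp_all
  have hdetM₃ : M₃.det = -(T.det * S.det) := by
    have h1 : (M₃.submatrix id σ).det = Equiv.Perm.sign σ * M₃.det :=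
      det_permute' σ M₃
    rw [hswap, det_fromBlocks_zero₂₁] at h1
    have hsign : Equiv.Perm.sign σ = -1 := by
      rw [hσ]
      exact Equiv.Perm.sign_swap (by simp)
    rw [hsign] at h1
    simp at h1
    linear_combination h1
  have hTdet : T.det = b * (A₁.submatrix u.succAbove u.succAbove).det :=
    det_updateCol_if_single A₁ u b
  have hSdet : S.det = c * (A₂.submatrix v.succAbove v.succAbove).det :=
    det_updateCol_if_single A₂ v c
  rw [hM] at step1
  rw [step1, hMf, det_fromBlocks_zero₂₁, step2, hdetg', hdetM₃,
    hTdet, hSdet]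
  ring
end

section
/- Let R be a commutative ring, let A be a square matrix over R indexed by a finite type V, let v ∈ V, and let c = [c₁, …, c_k] (k ≥ 1) be a list of elements of R. Let G be the matrix indexed by V ⊕ Fin(k−1) obtained by grafting the chain c onto v: G agrees with A on the V×V block except that G(v,v) = A(v,v) + c₁; the added vertices carry diagonal entries c₂, …, c_k; there are entries −1 (in both symmetric positions) between v and the vertex carrying c₂ and between consecutive added vertices; and all other entries are 0. Then det G = |c₂, …, c_k| · det A + |c₁, …, c_k| · det(A with row and column v deleted). -/
/-- The symmetric tridiagonal matrix with diagonal entries given by the list `L`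
and `-1` immediately above and below the diagonal. -/
def triMat {R : Type*} [CommRing R] (L : List R) :
    Matrix (Fin L.length) (Fin L.length) R :=
  Matrix.of fun i j =>
    if (i : ℕ) = (j : ℕ) then L.get i
    else if (i : ℕ) + 1 = (j : ℕ) ∨ (j : ℕ) + 1 = (i : ℕ) then -1 else 0

/-- The tridiagonal determinant `|n₁, …, n_k|`; the determinant of the empty list is `1`. -/
def tridet {R : Type*} [CommRing R] (L : List R) : R := (triMat L).det

/-- The matrix obtained from `A` by grafting the chain `c₁ :: rest` onto the vertex `v`:
the diagonal entry at `v` becomes `A v v + c₁`, the added vertices carry diagonal entries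
from `rest`, the vertex `v` is joined by `-1` to the first added vertex, and consecutive
added vertices are joined by `-1`. -/
def graftChain {R : Type*} [CommRing R] {V : Type*} [DecidableEq V]
    (A : Matrix V V R) (v : V) (c₁ : R) (rest : List R) :
    Matrix (V ⊕ Fin rest.length) (V ⊕ Fin rest.length) R :=
  Matrix.of fun x y =>
    match x, y with
    | .inl w, .inl w' => if w = v ∧ w' = v then A v v + c₁ else A w w'
    | .inl w, .inr j => if w = v ∧ (j : ℕ) = 0 then -1 else 0
    | .inr i, .inl w => if w = v ∧ (i : ℕ) = 0 then -1 else 0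
    | .inr i, .inr j =>
        if (i : ℕ) = (j : ℕ) then rest.get i
        else if (i : ℕ) + 1 = (j : ℕ) ∨ (j : ℕ) + 1 = (i : ℕ) then -1 else 0

section
open Matrix


variable {R : Type*} [CommRing R]

section helpers
variable {V : Type*} [Fintype V] [DecidableEq V]

def neSumEquiv (v : V) : {w : V // w ≠ v} ⊕ Unit ≃ V where
  toFun := Sum.elim (fun w => (w : V)) (fun _ => v)
  invFun w := if h : w = v then Sum.inr () else Sum.inl ⟨w, h⟩
  left_inv := by
    rintro (⟨w, hw⟩ | ⟨⟩)
    · simp [hw]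
    · simp
  right_inv w := by by_cases h : w = v <;> simp [h]

lemma det_row_single (M : Matrix V V R) (v : V) (d : R)
    (h : ∀ w, M v w = if w = v then d else 0) :
    M.det = d * (M.submatrix (fun w : {w : V // w ≠ v} => (w : V))
      (fun w : {w : V // w ≠ v} => (w : V))).det := by
  rw [← Matrix.det_submatrix_equiv_self (neSumEquiv v) M]
  have hM : M.submatrix (neSumEquiv v) (neSumEquiv v) =
      Matrix.fromBlocks
        (M.submatrix (fun w : {w : V // w ≠ v} => (w : V)) (fun w : {w : V // w ≠ v} => (w : V)))
        (Matrix.of fun i _ => M i v) 0 (Matrix.of fun _ _ => d) := by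
    ext x y
    rcases x with x | x <;> rcases y with y | y
    · simp [neSumEquiv, Matrix.fromBlocks]
    · simp [neSumEquiv, Matrix.fromBlocks]
    · simp [neSumEquiv, Matrix.fromBlocks, h, y.2]
    · simp [neSumEquiv, Matrix.fromBlocks, h]
  rw [hM, Matrix.det_fromBlocks_zero₂₁, Matrix.det_unique (Matrix.of fun _ _ => d), mul_comm]
  simp

lemma det_col_single (M : Matrix V V R) (v : V) (d : R)
    (h : ∀ w, M w v = if w = v then d else 0) :
    M.det = d * (M.submatrix (fun w : {w : V // w ≠ v} => (w : V))
      (fun w : {w : V // w ≠ v} => (w : V))).det := by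
  rw [← Matrix.det_transpose M, det_row_single Mᵀ v d (by simpa using h), ← Matrix.det_transpose]
  rfl

lemma det_swap_rows (M : Matrix V V R) (a b : V) (hab : a ≠ b) :
    M.det = -(M.submatrix (Equiv.swap a b) id).det := by
  rw [Matrix.det_permute, Equiv.Perm.sign_swap hab]
  simp

end helpers
variable {R : Type*} [CommRing R]

def triT (n : ℕ) (d : ℕ → R) : Matrix (Fin n) (Fin n) R :=
  Matrix.of fun i j =>
    if (i : ℕ) = (j : ℕ) then d i
    else if (i : ℕ) + 1 = (j : ℕ) ∨ (j : ℕ) + 1 = (i : ℕ) then -1 else 0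

lemma triMat_eq_triT (L : List R) : triMat L = triT L.length (fun k => L.getD k 0) := by
  ext i j
  simp only [triMat, triT, Matrix.of_apply]
  rcases eq_or_ne (i : ℕ) (j : ℕ) with h | h
  · rw [if_pos h, if_pos h, List.getD_eq_getElem _ _ i.isLt, List.get_eq_getElem]
  · rw [if_neg h, if_neg h]

lemma triT_det_rec (n : ℕ) (d : ℕ → R) :
    (triT (n + 2) d).det
      = d 0 * (triT (n + 1) (fun k => d (k + 1))).det - (triT n (fun k => d (k + 2))).det := by
  have h1 : ((triT (n + 2) d).submatrix
        (Fin.succ : Fin (n + 1) → Fin (n + 2)) Fin.succ) = triT (n + 1) (fun k => d (k + 1)) := by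
    ext i j
    simp only [triT, Matrix.submatrix_apply, Matrix.of_apply, Fin.val_succ]
    rcases eq_or_ne (i : ℕ) (j : ℕ) with h | h
    · rw [if_pos (by omega), if_pos h, h]
    · rw [if_neg (by omega), if_neg h]
      by_cases h2 : (i : ℕ) + 1 = (j : ℕ) ∨ (j : ℕ) + 1 = (i : ℕ)
      · rw [if_pos (by omega), if_pos h2]
      · rw [if_neg (by omega), if_neg h2]
  have h2 : ((triT (n + 2) d).submatrix
        (Fin.succ : Fin (n + 1) → Fin (n + 2))
        ((1 : Fin (n + 2)).succAbove)).det = -(triT n (fun k => d (k + 2))).det := by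
    rw [Matrix.det_succ_column_zero, Fin.sum_univ_succ]
    have hz : ∀ i : Fin n,
        (triT (n + 2) d).submatrix (Fin.succ : Fin (n + 1) → Fin (n + 2))
          ((1 : Fin (n + 2)).succAbove) i.succ 0 = 0 := by
      intro i
      show triT (n + 2) d i.succ.succ ((1 : Fin (n + 2)).succAbove 0) = 0
      have he : (1 : Fin (n + 2)).succAbove 0 = 0 := rfl
      rw [he]
      simp only [triT, Matrix.of_apply, Fin.val_succ, Fin.val_zero]
      split_ifs <;> simp_all
    simp only [hz, mul_zero, zero_mul, Finset.sum_const_zero, add_zero]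
    have h00 : (triT (n + 2) d).submatrix (Fin.succ : Fin (n + 1) → Fin (n + 2))
        ((1 : Fin (n + 2)).succAbove) (0 : Fin (n + 1)) 0 = -1 := by
      show triT (n + 2) d (0 : Fin (n + 1)).succ ((1 : Fin (n + 2)).succAbove 0) = -1
      have he : (1 : Fin (n + 2)).succAbove 0 = 0 := rfl
      rw [he]
      have hv : (((0 : Fin (n + 1)).succ : Fin (n + 2)) : ℕ) = 1 := by simp
      simp only [triT, Matrix.of_apply, hv, Fin.val_zero]
      norm_num
    rw [h00]
    have hmin : ((triT (n + 2) d).submatrix (Fin.succ : Fin (n + 1) → Fin (n + 2))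
          ((1 : Fin (n + 2)).succAbove)).submatrix
          ((0 : Fin (n + 1)).succAbove) Fin.succ = triT n (fun k => d (k + 2)) := by
      ext i j
      have hc : (1 : Fin (n + 2)).succAbove j.succ = j.succ.succ := by
        have := Fin.succ_succAbove_succ (0 : Fin (n + 1)) j
        simpa using this
      show triT (n + 2) d ((0 : Fin (n + 1)).succAbove i).succ
          ((1 : Fin (n + 2)).succAbove j.succ) = triT n (fun k => d (k + 2)) i j
      rw [hc, Fin.zero_succAbove]
      simp only [triT, Matrix.of_apply, Fin.val_succ]
      rcases eq_or_ne (i : ℕ) (j : ℕ) with h | h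
      · rw [if_pos (by omega), if_pos h, h]
      · rw [if_neg (by omega), if_neg h]
        by_cases h3 : (i : ℕ) + 1 = (j : ℕ) ∨ (j : ℕ) + 1 = (i : ℕ)
        · rw [if_pos (by omega), if_pos h3]
        · rw [if_neg (by omega), if_neg h3]
    rw [hmin]
    simp
  rw [Matrix.det_succ_row_zero, Fin.sum_univ_succ, Fin.sum_univ_succ]
  have hz : ∀ j : Fin n, triT (n + 2) d (0 : Fin (n + 2)) j.succ.succ = 0 := by
    intro j
    simp only [triT, Matrix.of_apply, Fin.val_succ, Fin.val_zero]
    split_ifs <;> simp_all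
  simp only [hz, mul_zero, zero_mul, Finset.sum_const_zero, add_zero]
  have e00 : triT (n + 2) d (0 : Fin (n + 2)) 0 = d 0 := by
    simp [triT]
  have e01 : triT (n + 2) d (0 : Fin (n + 2)) (0 : Fin (n + 1)).succ = -1 := by
    have hv : (((0 : Fin (n + 1)).succ : Fin (n + 2)) : ℕ) = 1 := by simp
    simp only [triT, Matrix.of_apply, hv, Fin.val_zero]
    norm_num
  rw [e00, e01]
  rw [show ((0 : Fin (n + 2)).succAbove) = Fin.succ from Fin.succAbove_zero]
  rw [h1]
  rw [show ((0 : Fin (n + 1)).succ) = (1 : Fin (n + 2)) from rfl, h2]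
  norm_num
  ring

lemma tridet_nil : tridet ([] : List R) = 1 := Matrix.det_fin_zero

lemma tridet_singleton (a : R) : tridet [a] = a := by
  haveI : Unique (Fin ([a].length)) := by
    rw [show [a].length = 1 from rfl]
    infer_instance
  rw [tridet, Matrix.det_unique]
  simp [triMat, default]

lemma tridet_cons_cons (a b : R) (L : List R) :
    tridet (a :: b :: L) = a * tridet (b :: L) - tridet L := by
  rw [tridet, tridet, tridet, triMat_eq_triT, triMat_eq_triT, triMat_eq_triT]
  simp only [List.length_cons]
  rw [triT_det_rec]
  have ha : ((a :: b :: L).getD 0 0) = a := rfl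
  have hb : (fun k => (a :: b :: L).getD (k + 1) 0) = (fun k => (b :: L).getD k 0) := by
    funext k; simp
  have hc : (fun k => (a :: b :: L).getD (k + 2) 0) = (fun k => L.getD k 0) := by
    funext k; simp
  rw [ha, hb, hc]

section equivs
variable {V : Type*}

def stepEquiv (V : Type*) (n : ℕ) : (V ⊕ Fin 1) ⊕ Fin n ≃ V ⊕ Fin (n + 1) where
  toFun x :=
    match x with
    | .inl (.inl w) => .inl w
    | .inl (.inr _) => .inr 0
    | .inr j => .inr j.succ
  invFun y :=
    match y with
    | .inl w => .inl (.inl w)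
    | .inr i => Fin.cases (Sum.inl (Sum.inr 0)) (fun j => Sum.inr j) i
  left_inv := by
    rintro ((w | k) | j)
    · rfl
    · simp [Subsingleton.elim k 0]
    · simp
  right_inv := by
    rintro (w | i)
    · rfl
    · induction i using Fin.cases <;> simp

def oneEquiv (V : Type*) : V ≃ {x : V ⊕ Fin 1 // x ≠ Sum.inr 0} where
  toFun w := ⟨Sum.inl w, by simp⟩
  invFun x :=
    match x with
    | ⟨Sum.inl w, _⟩ => w
    | ⟨Sum.inr k, h⟩ => (h (by rw [Subsingleton.elim k (0 : Fin 1)])).elim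
  left_inv w := rfl
  right_inv := by
    rintro ⟨w | k, h⟩
    · rfl
    · exact (h (by rw [Subsingleton.elim k (0 : Fin 1)])).elim
end equivs

section bump
variable {R : Type*} [CommRing R] {V : Type*} [Fintype V] [DecidableEq V]

lemma det_bump (A : Matrix V V R) (v : V) (c : R) :
    (Matrix.of fun w w' => if w = v ∧ w' = v then A v v + c else A w w').det
      = A.det + c * (A.submatrix (fun w : {w : V // w ≠ v} => (w : V))
        (fun w : {w : V // w ≠ v} => (w : V))).det := by
  have hM : (Matrix.of fun w w' => if w = v ∧ w' = v then A v v + c else A w w')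
      = A.updateRow v (A v + Pi.single v c) := by
    ext w w'
    by_cases hw : w = v <;> by_cases hw' : w' = v <;>
      simp [Matrix.updateRow_apply, hw, hw', Pi.single_apply]
  rw [hM, Matrix.det_updateRow_add, Matrix.updateRow_eq_self]
  congr 1
  rw [det_row_single (A.updateRow v (Pi.single v c)) v c
    (fun w => by simp [Matrix.updateRow_apply, Pi.single_apply])]
  have hsub : (A.updateRow v (Pi.single v c)).submatrix
      (fun w : {w : V // w ≠ v} => (w : V)) (fun w : {w : V // w ≠ v} => (w : V))
      = A.submatrix (fun w : {w : V // w ≠ v} => (w : V))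
        (fun w : {w : V // w ≠ v} => (w : V)) := by
    ext i j
    simp [Matrix.updateRow_apply, i.2]
  rw [hsub]
end bump

theorem det_graft_aux {R : Type u} [CommRing R] (rest : List R) :
    ∀ {V : Type v} [Fintype V] [DecidableEq V] (A : Matrix V V R) (v : V) (c₁ : R),
    (graftChain A v c₁ rest).det
      = tridet rest * A.det
        + tridet (c₁ :: rest) *
          (A.submatrix (fun i : {w : V // w ≠ v} => (i : V))
            (fun i : {w : V // w ≠ v} => (i : V))).det := by
  induction rest with
  | nil =>
    intro V _ _ A v c₁
    have hG : (graftChain A v c₁ []).submatrix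
          ((Equiv.sumEmpty V (Fin 0)).symm) ((Equiv.sumEmpty V (Fin 0)).symm)
        = Matrix.of fun w w' => if w = v ∧ w' = v then A v v + c₁ else A w w' := by
      ext w w'
      have he : ∀ w : V, (Equiv.sumEmpty V (Fin 0)).symm w = Sum.inl w := fun _ => rfl
      simp [graftChain, he]
    calc (graftChain A v c₁ []).det
        = ((graftChain A v c₁ []).submatrix
            ((Equiv.sumEmpty V (Fin 0)).symm) ((Equiv.sumEmpty V (Fin 0)).symm)).det :=
          (Matrix.det_submatrix_equiv_self _ _).symm
      _ = tridet ([] : List R) * A.det + tridet [c₁] *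
            (A.submatrix (fun i : {w : V // w ≠ v} => (i : V))
              (fun i : {w : V // w ≠ v} => (i : V))).det := by
          rw [hG, det_bump, tridet_nil, tridet_singleton]
          ring
  | cons r rest' ih =>
    intro V _ _ A v c₁
    set u : V ⊕ Fin 1 := Sum.inr 0 with hu
    let A'' : Matrix (V ⊕ Fin 1) (V ⊕ Fin 1) R := graftChain A v c₁ [(0 : R)]
    -- Claim 1 : reindexing
    have h0 : (graftChain A v c₁ (r :: rest')).submatrix
        (stepEquiv V rest'.length) (stepEquiv V rest'.length) = graftChain A'' u r rest' := by
      ext x y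
      rcases x with (w | k) | i <;> rcases y with (w' | k') | j
      · simp [graftChain, stepEquiv, A'', hu]
      · simp [graftChain, stepEquiv, A'', hu, Subsingleton.elim k' 0]
      · simp [graftChain, stepEquiv, A'', hu]
      · simp [graftChain, stepEquiv, A'', hu, Subsingleton.elim k 0]
      · simp [graftChain, stepEquiv, A'', hu, Subsingleton.elim k 0, Subsingleton.elim k' 0]
      · simp [graftChain, stepEquiv, A'', hu, Subsingleton.elim k 0]
      · simp [graftChain, stepEquiv, A'', hu]
      · simp [graftChain, stepEquiv, A'', hu, Subsingleton.elim k' 0]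
      · simp [graftChain, stepEquiv, A'', hu]
    have hre : (graftChain A v c₁ (r :: rest')).det = (graftChain A'' u r rest').det := by
      calc (graftChain A v c₁ (r :: rest')).det
          = ((graftChain A v c₁ (r :: rest')).submatrix
              (stepEquiv V rest'.length) (stepEquiv V rest'.length)).det :=
            (Matrix.det_submatrix_equiv_self _ _).symm
        _ = (graftChain A'' u r rest').det := by rw [h0]
    -- Claim 2 : the minor of A'' at u
    have h2m : (A''.submatrix (fun i : {w : V ⊕ Fin 1 // w ≠ u} => (i : V ⊕ Fin 1))
          (fun i : {w : V ⊕ Fin 1 // w ≠ u} => (i : V ⊕ Fin 1))).det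
        = A.det + c₁ * (A.submatrix (fun i : {w : V // w ≠ v} => (i : V))
            (fun i : {w : V // w ≠ v} => (i : V))).det := by
      have hEq : ((A''.submatrix (fun i : {w : V ⊕ Fin 1 // w ≠ u} => (i : V ⊕ Fin 1))
            (fun i : {w : V ⊕ Fin 1 // w ≠ u} => (i : V ⊕ Fin 1))).submatrix
            (oneEquiv V) (oneEquiv V))
          = Matrix.of fun w w' => if w = v ∧ w' = v then A v v + c₁ else A w w' := by
        ext w w'
        simp [A'', graftChain, oneEquiv]
      calc (A''.submatrix (fun i : {w : V ⊕ Fin 1 // w ≠ u} => (i : V ⊕ Fin 1))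
            (fun i : {w : V ⊕ Fin 1 // w ≠ u} => (i : V ⊕ Fin 1))).det
          = ((A''.submatrix (fun i : {w : V ⊕ Fin 1 // w ≠ u} => (i : V ⊕ Fin 1))
              (fun i : {w : V ⊕ Fin 1 // w ≠ u} => (i : V ⊕ Fin 1))).submatrix
              (oneEquiv V) (oneEquiv V)).det := (Matrix.det_submatrix_equiv_self _ _).symm
        _ = _ := by rw [hEq, det_bump]
    -- Claim 3 : the determinant of A''
    have h3m : A''.det = -(A.submatrix (fun i : {w : V // w ≠ v} => (i : V))
          (fun i : {w : V // w ≠ v} => (i : V))).det := by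
      have hd1 : A''.det = -(A''.submatrix (Equiv.swap u (Sum.inl v)) id).det :=
        det_swap_rows _ _ _ (by simp [hu])
      have hcol : ∀ x, (A''.submatrix (Equiv.swap u (Sum.inl v)) id) x u
          = if x = u then (-1 : R) else 0 := by
        intro x
        rcases x with w | k
        · by_cases hw : w = v
          · subst hw
            simp [A'', graftChain, Equiv.swap_apply_right, hu]
          · have hfix : Equiv.swap u (Sum.inl v) (Sum.inl w) = Sum.inl w :=
              Equiv.swap_apply_of_ne_of_ne (by simp [hu]) (by simp [hw])
            rw [hu] at hfix
            simp [A'', graftChain, hfix, hw, hu]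
        · have hk : (Sum.inr k : V ⊕ Fin 1) = u := by rw [hu, Subsingleton.elim k 0]
          rw [hk]
          simp [A'', graftChain, Equiv.swap_apply_left, hu]
      have hd2 : (A''.submatrix (Equiv.swap u (Sum.inl v)) id).det
          = (-1 : R) * (((A''.submatrix (Equiv.swap u (Sum.inl v)) id).submatrix
              (fun i : {w : V ⊕ Fin 1 // w ≠ u} => (i : V ⊕ Fin 1))
              (fun i : {w : V ⊕ Fin 1 // w ≠ u} => (i : V ⊕ Fin 1))).det) :=
        det_col_single _ u (-1) hcol
      have hd3 : (((A''.submatrix (Equiv.swap u (Sum.inl v)) id).submatrix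
            (fun i : {w : V ⊕ Fin 1 // w ≠ u} => (i : V ⊕ Fin 1))
            (fun i : {w : V ⊕ Fin 1 // w ≠ u} => (i : V ⊕ Fin 1))).det)
          = ((((A''.submatrix (Equiv.swap u (Sum.inl v)) id).submatrix
              (fun i : {w : V ⊕ Fin 1 // w ≠ u} => (i : V ⊕ Fin 1))
              (fun i : {w : V ⊕ Fin 1 // w ≠ u} => (i : V ⊕ Fin 1))).submatrix
              (oneEquiv V) (oneEquiv V)).det) := (Matrix.det_submatrix_equiv_self _ _).symm
      set Q : Matrix V V R := ((A''.submatrix (Equiv.swap u (Sum.inl v)) id).submatrix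
          (fun i : {w : V ⊕ Fin 1 // w ≠ u} => (i : V ⊕ Fin 1))
          (fun i : {w : V ⊕ Fin 1 // w ≠ u} => (i : V ⊕ Fin 1))).submatrix
          (oneEquiv V) (oneEquiv V) with hQ
      have hQrow : ∀ w', Q v w' = if w' = v then (-1 : R) else 0 := by
        intro w'
        rw [hQ]
        simp [A'', graftChain, oneEquiv, Equiv.swap_apply_right, hu]
      have hd4 : Q.det = (-1 : R) * ((Q.submatrix (fun i : {w : V // w ≠ v} => (i : V))
          (fun i : {w : V // w ≠ v} => (i : V))).det) := det_row_single Q v (-1) hQrow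
      have hQsub : Q.submatrix (fun i : {w : V // w ≠ v} => (i : V))
          (fun i : {w : V // w ≠ v} => (i : V))
          = A.submatrix (fun i : {w : V // w ≠ v} => (i : V))
            (fun i : {w : V // w ≠ v} => (i : V)) := by
        ext i j
        have hfix : Equiv.swap u (Sum.inl v) (Sum.inl (i : V)) = Sum.inl (i : V) :=
          Equiv.swap_apply_of_ne_of_ne (by simp [hu]) (by simp [i.2])
        rw [hQ]
        simp [A'', graftChain, oneEquiv, hfix, i.2]
      rw [hd1, hd2, hd3, hd4, hQsub]
      ring
    rw [hre, ih A'' u r, h2m, h3m, tridet_cons_cons]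
    ring

end

/-- The single-hair case of the hairy-graph determinant theorem, in its division-free form:
`det G = |c₂, …, c_k| · det A + |c₁, …, c_k| · det (A ∖ v)`. -/
theorem det_graft_single_chain {R : Type*} [CommRing R] {V : Type*}
    [Fintype V] [DecidableEq V]
    (A : Matrix V V R) (v : V) (c₁ : R) (rest : List R) :
    (graftChain A v c₁ rest).det
      = tridet rest * A.det
        + tridet (c₁ :: rest) *
          (A.submatrix (fun i : {w : V // w ≠ v} => (i : V))
            (fun i : {w : V // w ≠ v} => (i : V))).det :=
  det_graft_aux rest A v c₁
end

section
/- The map sending a nonempty list of integers [n₁, …, n_k] with n₁ ≥ 1 and nᵢ ≥ 2 for all i ≥ 2 to the value HJ([n₁, …, n_k]) of its Hirzebruch–Jung continued fraction is well defined and is a bijection onto the set of positive rational numbers. -/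
/-- The Hirzebruch–Jung continued fraction of a list of integers, computed in `ℚ`:
`HJ([n]) = n`, `HJ(n :: L) = n − 1 / HJ(L)` (with junk value `0` on the empty list). -/
def hj : List ℤ → ℚ
  | [] => 0
  | [n] => (n : ℚ)
  | n :: L => (n : ℚ) - 1 / hj L

lemma hj_singleton (n : ℤ) : hj [n] = (n : ℚ) := rfl

lemma hj_cons (n : ℤ) (L : List ℤ) (h : L ≠ []) : hj (n :: L) = (n : ℚ) - 1 / hj L := by
  match L with
  | [] => exact absurd rfl h
  | m :: M => rfl

/-- If all entries are at least 2, the HJ value is greater than 1. -/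
lemma hj_gt_one : ∀ L : List ℤ, L ≠ [] → (∀ n ∈ L, 2 ≤ n) → 1 < hj L := by
  intro L
  induction L with
  | nil => intro h; exact absurd rfl h
  | cons a L ih =>
    intro _ hall
    have ha : 2 ≤ a := hall a List.mem_cons_self
    have ha' : (2 : ℚ) ≤ (a : ℚ) := by exact_mod_cast ha
    rcases eq_or_ne L [] with rfl | hL
    · rw [hj_singleton]; linarith
    · have hL1 : 1 < hj L := ih hL (fun n hn => hall n (List.mem_cons_of_mem a hn))
      have h0 : 0 < hj L := by linarith
      have : 1 / hj L < 1 := by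
        rw [div_lt_one h0]; exact hL1
      have : 0 < 1 / hj L := by positivity
      rw [hj_cons a L hL]; linarith

/-- Bounds for a list with nonempty tail whose entries are all ≥ 2. -/
lemma hj_bounds (a : ℤ) (L : List ℤ) (hL : L ≠ []) (hall : ∀ n ∈ L, 2 ≤ n) :
    (a : ℚ) - 1 < hj (a :: L) ∧ hj (a :: L) < a := by
  have hL1 : 1 < hj L := hj_gt_one L hL hall
  have h0 : 0 < hj L := by linarith
  have h1 : 1 / hj L < 1 := by rw [div_lt_one h0]; exact hL1
  have h2 : 0 < 1 / hj L := by positivity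
  rw [hj_cons a L hL]
  constructor <;> linarith

lemma hj_pos (L : List ℤ) (hne : L ≠ []) (hh : 1 ≤ L.headI) (ht : ∀ n ∈ L.tail, 2 ≤ n) :
    0 < hj L := by
  match L with
  | [] => exact absurd rfl hne
  | a :: L =>
    simp only [List.headI] at hh
    simp only [List.tail] at ht
    rcases eq_or_ne L [] with rfl | hL
    · rw [hj_singleton]; exact_mod_cast hh
    · have := (hj_bounds a L hL ht).1
      have : (1 : ℚ) ≤ (a : ℚ) := by exact_mod_cast hh
      linarith [(hj_bounds a L hL ht).1]

/-- Injectivity of `hj` on admissible lists. -/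
lemma hj_inj : ∀ L : List ℤ, L ≠ [] → 1 ≤ L.headI → (∀ n ∈ L.tail, 2 ≤ n) →
    ∀ M : List ℤ, M ≠ [] → 1 ≤ M.headI → (∀ n ∈ M.tail, 2 ≤ n) →
    hj L = hj M → L = M := by
  intro L
  induction L with
  | nil => intro h; exact absurd rfl h
  | cons a L ih =>
    intro _ hhL htL M hMne hhM htM heq
    match M with
    | [] => exact absurd rfl hMne
    | b :: M =>
      simp only [List.headI] at hhL hhM
      simp only [List.tail] at htL htM
      rcases eq_or_ne L [] with rfl | hL
      · rcases eq_or_ne M [] with rfl | hM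
        · -- both singletons
          rw [hj_singleton, hj_singleton] at heq
          have : a = b := by exact_mod_cast heq
          rw [this]
        · -- L singleton, M not
          exfalso
          rw [hj_singleton] at heq
          obtain ⟨h1, h2⟩ := hj_bounds b M hM htM
          rw [← heq] at h1 h2
          have h1' : b - 1 < a := by exact_mod_cast h1
          have h2' : a < b := by exact_mod_cast h2
          omega
      · rcases eq_or_ne M [] with rfl | hM
        · exfalso
          rw [hj_singleton] at heq
          obtain ⟨h1, h2⟩ := hj_bounds a L hL htL
          rw [heq] at h1 h2
          have h1' : a - 1 < b := by exact_mod_cast h1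
          have h2' : b < a := by exact_mod_cast h2
          omega
        · -- both have nonempty tails
          obtain ⟨ha1, ha2⟩ := hj_bounds a L hL htL
          obtain ⟨hb1, hb2⟩ := hj_bounds b M hM htM
          rw [heq] at ha1 ha2
          have h1 : a - 1 < b := by exact_mod_cast lt_of_lt_of_le ha1 (le_of_lt hb2)
          have h2 : b - 1 < a := by exact_mod_cast lt_of_lt_of_le hb1 (le_of_lt ha2)
          have hab : a = b := by omega
          subst hab
          rw [hj_cons a L hL, hj_cons a M hM] at heq
          have hL1 : 1 < hj L := hj_gt_one L hL htL
          have hM1 : 1 < hj M := hj_gt_one M hM htM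
          have hL0 : hj L ≠ 0 := by linarith
          have hM0 : hj M ≠ 0 := by linarith
          have hdiv : 1 / hj L = 1 / hj M := by linarith
          rw [div_eq_div_iff hL0 hM0] at hdiv
          have htails : hj L = hj M := by linarith
          have hLheadI : 1 ≤ L.headI := by
            match L with
            | c :: L' => exact le_trans (by norm_num) (htL c List.mem_cons_self)
          have hMheadI : 1 ≤ M.headI := by
            match M with
            | c :: M' => exact le_trans (by norm_num) (htM c List.mem_cons_self)
          have := ih hL hLheadI (fun n hn => htL n (List.mem_of_mem_tail hn))
            M hM hMheadI (fun n hn => htM n (List.mem_of_mem_tail hn)) htails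
          rw [this]

/-- The key denominator-decreasing step for the HJ algorithm. -/
lemma hj_den_lt (q : ℚ) (hq : q < ⌈q⌉) : (((⌈q⌉ : ℚ) - q)⁻¹).den < q.den := by
  set n : ℤ := ⌈q⌉ with hn
  set c : ℤ := n * q.den - q.num with hc
  have hden : (0 : ℤ) < (q.den : ℤ) := by exact_mod_cast q.pos
  have hc0 : 0 < c := by
    have : q.num < n * q.den := by
      have : (q.num : ℚ) / q.den < n := by rw [Rat.num_div_den]; exact_mod_cast hq
      rw [div_lt_iff₀ (by exact_mod_cast q.pos)] at this
      exact_mod_cast this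
    omega
  have hclt : c < q.den := by
    have h1 : (n : ℚ) < q + 1 := by exact_mod_cast Int.ceil_lt_add_one q
    have : (n : ℚ) < (q.num : ℚ) / q.den + 1 := by rwa [Rat.num_div_den]
    have h2 : (n : ℚ) * q.den < q.num + q.den := by
      have hden' : (0 : ℚ) < (q.den : ℚ) := by exact_mod_cast q.pos
      calc (n : ℚ) * q.den < ((q.num : ℚ) / q.den + 1) * q.den := by
            exact mul_lt_mul_of_pos_right this hden'
        _ = q.num + q.den := by field_simp
    have : n * (q.den : ℤ) < q.num + q.den := by exact_mod_cast h2
    omega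
  have hcop : Nat.Coprime ((q.den : ℤ)).natAbs c.natAbs := by
    have h1 : IsCoprime (q.den : ℤ) q.num := by
      rw [Int.isCoprime_iff_gcd_eq_one, Int.gcd_comm]
      exact q.reduced
    have h2 : IsCoprime (q.den : ℤ) c := by
      have : c = -q.num + (q.den : ℤ) * n := by rw [hc]; ring
      rw [this]
      exact h1.neg_right.add_mul_left_right n
    rwa [Int.isCoprime_iff_gcd_eq_one] at h2
  have hval : ((n : ℚ) - q)⁻¹ = ((q.den : ℤ) : ℚ) / (c : ℚ) := by
    have hden0 : ((q.den : ℤ) : ℚ) ≠ 0 := by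
      have : (0 : ℚ) < ((q.den : ℤ) : ℚ) := by exact_mod_cast hden
      linarith
    have hnum : (n : ℚ) - q = (c : ℚ) / ((q.den : ℤ) : ℚ) := by
      rw [eq_div_iff hden0, hc]
      have hmul : q * (q.den : ℚ) = (q.num : ℚ) := Rat.mul_den_eq_num q
      push_cast
      nlinarith [hmul]
    rw [hnum, inv_div]
  have hden_eq : ((((q.den : ℤ) : ℚ) / (c : ℚ)).den : ℤ) = c :=
    Rat.den_div_eq_of_coprime hc0 hcop
  rw [hval]
  omega

/-- Surjectivity onto rationals greater than 1, with lists all of whose entries are ≥ 2. -/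
lemma hj_surj_aux : ∀ d : ℕ, ∀ q : ℚ, q.den = d → 1 < q →
    ∃ L : List ℤ, L ≠ [] ∧ (∀ n ∈ L, 2 ≤ n) ∧ hj L = q := by
  intro d
  induction d using Nat.strong_induction_on with
  | _ d ih =>
    intro q hd hq
    set n : ℤ := ⌈q⌉ with hn
    have hn2 : 2 ≤ n := by
      have : 1 < n := Int.lt_ceil.mpr (by exact_mod_cast hq)
      omega
    rcases eq_or_lt_of_le (Int.le_ceil q) with heq | hlt
    · exact ⟨[n], by simp, by intro m hm; simp at hm; omega, by rw [hj_singleton, ← heq]⟩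
    · set q' : ℚ := ((n : ℚ) - q)⁻¹ with hq'
      have hr0 : 0 < (n : ℚ) - q := by linarith
      have hr1 : (n : ℚ) - q < 1 := by
        have := Int.ceil_lt_add_one q
        have : (n : ℚ) < q + 1 := by exact_mod_cast this
        linarith
      have hq'1 : 1 < q' := by
        rw [hq']
        exact (one_lt_inv₀ hr0).mpr hr1
      have hden : q'.den < q.den := hj_den_lt q (by exact_mod_cast hlt)
      obtain ⟨L, hLne, hLall, hLval⟩ := ih q'.den (hd ▸ hden) q' rfl hq'1
      refine ⟨n :: L, by simp, ?_, ?_⟩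
      · intro m hm
        rcases List.mem_cons.mp hm with rfl | hm
        · exact hn2
        · exact hLall m hm
      · rw [hj_cons n L hLne, hLval, hq', one_div, inv_inv]
        ring

/-- Full surjectivity onto positive rationals. -/
lemma hj_surj (q : ℚ) (hq : 0 < q) :
    ∃ L : List ℤ, L ≠ [] ∧ 1 ≤ L.headI ∧ (∀ n ∈ L.tail, 2 ≤ n) ∧ hj L = q := by
  set n : ℤ := ⌈q⌉ with hn
  have hn1 : 1 ≤ n := by
    have : 0 < n := Int.lt_ceil.mpr (by exact_mod_cast hq)
    omega
  rcases eq_or_lt_of_le (Int.le_ceil q) with heq | hlt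
  · exact ⟨[n], by simp, by simpa using hn1, by simp, by rw [hj_singleton, ← heq]⟩
  · set q' : ℚ := ((n : ℚ) - q)⁻¹ with hq'
    have hr0 : 0 < (n : ℚ) - q := by linarith
    have hr1 : (n : ℚ) - q < 1 := by
      have := Int.ceil_lt_add_one q
      have : (n : ℚ) < q + 1 := by exact_mod_cast this
      linarith
    have hq'1 : 1 < q' := (one_lt_inv₀ hr0).mpr hr1
    obtain ⟨L, hLne, hLall, hLval⟩ := hj_surj_aux q'.den q' rfl hq'1
    refine ⟨n :: L, by simp, by simpa using hn1, by simpa using hLall, ?_⟩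
    rw [hj_cons n L hLne, hLval, hq', one_div, inv_inv]
    ring

/-- The generalized Hirzebruch–Jung correspondence: on the set of nonempty integer
lists `[n₁, …, n_k]` with `n₁ ≥ 1` and `nᵢ ≥ 2` for all `i ≥ 2`, the continued
fraction is well defined (every nonempty suffix has nonzero value) and `HJ` is a
bijection onto the set of positive rational numbers. -/
theorem hj_bijOn :
    (∀ L : List ℤ, L ∈ {L : List ℤ | L ≠ [] ∧ 1 ≤ L.headI ∧ ∀ n ∈ L.tail, 2 ≤ n} →
      ∀ M, M <:+ L → M ≠ [] → hj M ≠ 0) ∧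
    Set.BijOn hj {L : List ℤ | L ≠ [] ∧ 1 ≤ L.headI ∧ ∀ n ∈ L.tail, 2 ≤ n}
      {q : ℚ | 0 < q} := by
  constructor
  · rintro L ⟨hne, hh, ht⟩ M hM hMne
    match L with
    | [] => exact absurd rfl hne
    | a :: L =>
      rcases List.suffix_cons_iff.mp hM with rfl | hM'
      · exact ne_of_gt (hj_pos (a :: L) hne hh ht)
      · have hall : ∀ n ∈ M, 2 ≤ n := fun n hn => ht n (hM'.subset hn)
        exact ne_of_gt (lt_trans one_pos (hj_gt_one M hMne hall))
  · refine ⟨?_, ?_, ?_⟩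
    · rintro L ⟨hne, hh, ht⟩
      exact hj_pos L hne hh ht
    · rintro L ⟨hLne, hLh, hLt⟩ M ⟨hMne, hMh, hMt⟩ heq
      exact hj_inj L hLne hLh hLt M hMne hMh hMt heq
    · rintro q hq
      obtain ⟨L, h1, h2, h3, h4⟩ := hj_surj q hq
      exact ⟨L, ⟨h1, h2, h3⟩, h4⟩
end
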